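/- If R has constant antiholomorphic sectional curvature ν and satisfies identity 3, then the Ricci tensor S and the ⋆-Ricci tensor S′ satisfy (m+1)S − 3S′ = (1/(2m)){(m+1)τ − 3τ′} g, where τ, τ′ are the traces of S, S′. -/

import Mathlib

open scoped BigOperators InnerProductSpace

variable {V : Type*} [NormedAddCommGroup V] [InnerProductSpace ℝ V]

/-- The tensor `π₁(x,y,z,u) = g(x,u)g(y,z) − g(x,z)g(y,u)`. -/
def pi1 (x y z u : V) : ℝ := ⟪x, u⟫_ℝ * ⟪y, z⟫_ℝ - ⟪x, z⟫_ℝ * ⟪y, u⟫_ℝ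

/-- The tensor `ψ(Q)` associated to a bilinear form `Q` and an almost complex
structure `J`. -/
def psi (J : V →ₗ[ℝ] V) (Q : V → V → ℝ) (x y z u : V) : ℝ :=
  ⟪x, J u⟫_ℝ * Q y (J z) - ⟪x, J z⟫_ℝ * Q y (J u) - 2 * ⟪x, J y⟫_ℝ * Q z (J u)
    + ⟪y, J z⟫_ℝ * Q x (J u) - ⟪y, J u⟫_ℝ * Q x (J z) - 2 * ⟪z, J u⟫_ℝ * Q x (J y)

/-- `π₂ = (1/2) ψ(g)`. -/
noncomputable def pi2 (J : V →ₗ[ℝ] V) (x y z u : V) : ℝ :=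
  (1 / 2) * psi J (fun a b => ⟪a, b⟫_ℝ) x y z u

/-- An algebraic curvature tensor: multilinear (linearity in the first slot,
the others follow from the symmetries), antisymmetric in the first and the
last pairs, symmetric under exchange of the pairs, first Bianchi identity. -/
def IsACT (R : V → V → V → V → ℝ) : Prop :=
  (∀ x x' y z u, R (x + x') y z u = R x y z u + R x' y z u) ∧
  (∀ (c : ℝ) x y z u, R (c • x) y z u = c * R x y z u) ∧
  (∀ x y z u, R x y z u = -R y x z u) ∧
  (∀ x y z u, R x y z u = -R x y u z) ∧
  (∀ x y z u, R x y z u = R z u x y) ∧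
  (∀ x y z u, R x y z u + R y z x u + R z x y u = 0)

/-- Identity 1: `R(X,Y,Z,U) = R(X,Y,JZ,JU)`. -/
def Id1 (J : V →ₗ[ℝ] V) (R : V → V → V → V → ℝ) : Prop :=
  ∀ x y z u, R x y z u = R x y (J z) (J u)

/-- Identity 2: `R(X,Y,Z,U) = R(X,Y,JZ,JU) + R(X,JY,Z,JU) + R(JX,Y,Z,JU)`. -/
def Id2 (J : V →ₗ[ℝ] V) (R : V → V → V → V → ℝ) : Prop :=
  ∀ x y z u, R x y z u = R x y (J z) (J u) + R x (J y) z (J u) + R (J x) y z (J u)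

/-- Identity 3: `R(X,Y,Z,U) = R(JX,JY,JZ,JU)`. -/
def Id3 (J : V →ₗ[ℝ] V) (R : V → V → V → V → ℝ) : Prop :=
  ∀ x y z u, R x y z u = R (J x) (J y) (J z) (J u)

section aux
variable {R : V → V → V → V → ℝ}

lemma act_add1 (h : IsACT R) : ∀ x x' y z u, R (x + x') y z u = R x y z u + R x' y z u := h.1
lemma act_smul1 (h : IsACT R) : ∀ (c : ℝ) x y z u, R (c • x) y z u = c * R x y z u := h.2.1
lemma act_a12 (h : IsACT R) : ∀ x y z u, R x y z u = -R y x z u := h.2.2.1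
lemma act_a34 (h : IsACT R) : ∀ x y z u, R x y z u = -R x y u z := h.2.2.2.1
lemma act_pair (h : IsACT R) : ∀ x y z u, R x y z u = R z u x y := h.2.2.2.2.1
lemma act_bianchi (h : IsACT R) : ∀ x y z u, R x y z u + R y z x u + R z x y u = 0 := h.2.2.2.2.2

lemma act_add2 (h : IsACT R) : ∀ x y y' z u, R x (y + y') z u = R x y z u + R x y' z u := by
  intro x y y' z u
  rw [act_a12 h, act_add1 h, act_a12 h y, act_a12 h y']; ring

lemma act_smul2 (h : IsACT R) : ∀ (c : ℝ) x y z u, R x (c • y) z u = c * R x y z u := by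
  intro c x y z u
  rw [act_a12 h, act_smul1 h, act_a12 h y]; ring

lemma act_add3 (h : IsACT R) : ∀ x y z z' u, R x y (z + z') u = R x y z u + R x y z' u := by
  intro x y z z' u
  rw [act_pair h, act_add1 h, act_pair h z, act_pair h z']

lemma act_smul3 (h : IsACT R) : ∀ (c : ℝ) x y z u, R x y (c • z) u = c * R x y z u := by
  intro c x y z u
  rw [act_pair h, act_smul1 h, act_pair h z]

lemma act_add4 (h : IsACT R) : ∀ x y z u u', R x y z (u + u') = R x y z u + R x y z u' := by
  intro x y z u u'
  rw [act_a34 h, act_add3 h, act_a34 h _ _ u, act_a34 h _ _ u']; ring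

lemma act_smul4 (h : IsACT R) : ∀ (c : ℝ) x y z u, R x y z (c • u) = c * R x y z u := by
  intro c x y z u
  rw [act_a34 h, act_smul3 h, act_a34 h _ _ u]; ring

lemma act_neg1 (h : IsACT R) : ∀ x y z u, R (-x) y z u = -R x y z u := by
  intro x y z u
  have := act_smul1 h (-1) x y z u; simpa using this

lemma act_neg2 (h : IsACT R) : ∀ x y z u, R x (-y) z u = -R x y z u := by
  intro x y z u
  have := act_smul2 h (-1) x y z u; simpa using this

lemma act_neg3 (h : IsACT R) : ∀ x y z u, R x y (-z) u = -R x y z u := by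
  intro x y z u
  have := act_smul3 h (-1) x y z u; simpa using this

lemma act_neg4 (h : IsACT R) : ∀ x y z u, R x y z (-u) = -R x y z u := by
  intro x y z u
  have := act_smul4 h (-1) x y z u; simpa using this

lemma act_xx (h : IsACT R) : ∀ x z u, R x x z u = 0 := by
  intro x z u
  have := act_a12 h x x z u; linarith

lemma act_zz (h : IsACT R) : ∀ x y z, R x y z z = 0 := by
  intro x y z
  have := act_a34 h x y z z; linarith

/-- flip both pairs -/
lemma act_flip (h : IsACT R) : ∀ x y z u, R x y z u = R y x u z := by
  intro x y z u
  rw [act_a12 h, act_a34 h]; ring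

end aux

/-- Trace of a bilinear form is independent of the orthonormal basis. -/
lemma trace_indep {n : ℕ} (b c : OrthonormalBasis (Fin n) ℝ V) (Q : V → V → ℝ)
    (h1 : ∀ x x' y, Q (x + x') y = Q x y + Q x' y)
    (h2 : ∀ (t : ℝ) x y, Q (t • x) y = t * Q x y)
    (h3 : ∀ x y y', Q x (y + y') = Q x y + Q x y')
    (h4 : ∀ (t : ℝ) x y, Q x (t • y) = t * Q x y) :
    ∑ i, Q (b i) (b i) = ∑ i, Q (c i) (c i) := by
  classical
  set B : V →ₗ[ℝ] V →ₗ[ℝ] ℝ := LinearMap.mk₂ ℝ Q h1 h2 h3 h4 with hB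
  have hQB : ∀ x y, Q x y = B x y := fun x y => rfl
  have key : ∀ i, Q (b i) (b i) = ∑ j, ∑ k, ⟪c j, b i⟫_ℝ * (⟪c k, b i⟫_ℝ * Q (c j) (c k)) := by
    intro i
    rw [hQB]
    conv_lhs => rw [← c.sum_repr' (b i)]
    simp only [map_sum, map_smul, LinearMap.sum_apply, LinearMap.smul_apply, smul_eq_mul]
    rw [Finset.sum_comm]
    refine Finset.sum_congr rfl fun j _ => ?_
    rw [Finset.mul_sum]
    exact Finset.sum_congr rfl fun k _ => by rw [hQB (c k) (c j)]; ring
  calc ∑ i, Q (b i) (b i)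
      = ∑ i, ∑ j, ∑ k, ⟪c j, b i⟫_ℝ * (⟪c k, b i⟫_ℝ * Q (c j) (c k)) :=
        Finset.sum_congr rfl fun i _ => key i
    _ = ∑ j, ∑ k, (∑ i, ⟪c j, b i⟫_ℝ * ⟪b i, c k⟫_ℝ) * Q (c j) (c k) := by
        rw [Finset.sum_comm]
        refine Finset.sum_congr rfl fun j _ => ?_
        rw [Finset.sum_comm]
        refine Finset.sum_congr rfl fun k _ => ?_
        rw [Finset.sum_mul]
        refine Finset.sum_congr rfl fun i _ => ?_
        rw [real_inner_comm (b i) (c k)]; ring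
    _ = ∑ j, ∑ k, ⟪c j, c k⟫_ℝ * Q (c j) (c k) := by
        refine Finset.sum_congr rfl fun j _ => Finset.sum_congr rfl fun k _ => ?_
        rw [b.sum_inner_mul_inner]
    _ = ∑ j, Q (c j) (c j) := by
        refine Finset.sum_congr rfl fun j _ => ?_
        rw [Finset.sum_eq_single j]
        · rw [real_inner_self_eq_norm_sq, c.orthonormal.1 j, one_pow, one_mul]
        · intro k _ hk
          rw [c.orthonormal.2 (Ne.symm hk)]; ring
        · intro h; exact absurd (Finset.mem_univ j) h
section idents
variable (J : V →ₗ[ℝ] V) (R : V → V → V → V → ℝ)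

/-- J is skew-adjoint. -/
lemma J_skew (hJ2 : ∀ x, J (J x) = -x) (hJiso : ∀ x y, ⟪J x, J y⟫_ℝ = ⟪x, y⟫_ℝ)
    (x y : V) : ⟪J x, y⟫_ℝ = -⟪x, J y⟫_ℝ := by
  have h := hJiso x (J y)
  rw [hJ2 y, inner_neg_right] at h
  linarith

lemma J_inner_self (hJ2 : ∀ x, J (J x) = -x) (hJiso : ∀ x y, ⟪J x, J y⟫_ℝ = ⟪x, y⟫_ℝ)
    (x : V) : ⟪x, J x⟫_ℝ = 0 := by
  have h := J_skew J hJ2 hJiso x x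
  have h2 : ⟪J x, x⟫_ℝ = ⟪x, J x⟫_ℝ := real_inner_comm _ _
  linarith

lemma J_norm (hJ2 : ∀ x, J (J x) = -x) (hJiso : ∀ x y, ⟪J x, J y⟫_ℝ = ⟪x, y⟫_ℝ)
    (x : V) : ‖J x‖ = ‖x‖ := by
  have h := hJiso x x
  rw [real_inner_self_eq_norm_mul_norm, real_inner_self_eq_norm_mul_norm] at h
  nlinarith [norm_nonneg (J x), norm_nonneg x]
end idents

section curv
variable {J : V →ₗ[ℝ] V} {R : V → V → V → V → ℝ} {ν : ℝ}

lemma nu_scaled (hR : IsACT R)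
    (hν : ∀ x y : V, ‖x‖ = 1 → ‖y‖ = 1 → ⟪x, y⟫_ℝ = 0 → ⟪x, J y⟫_ℝ = 0 → R x y y x = ν)
    (x u : V) (hxu : ⟪x, u⟫_ℝ = 0) (hxJu : ⟪x, J u⟫_ℝ = 0) :
    R x u u x = ν * (‖x‖ ^ 2 * ‖u‖ ^ 2) := by
  by_cases hx : x = 0
  · subst hx
    have h0 : R (0 : V) u u 0 = 0 := by
      have := act_smul1 hR 0 0 u u 0
      simpa using this
    simp [h0]
  by_cases hu : u = 0
  · subst hu
    have h0 : R x (0 : V) 0 x = 0 := by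
      have := act_smul2 hR 0 x 0 0 x
      simpa using this
    simp [h0]
  have hx' : ‖x‖ ≠ 0 := by simpa using hx
  have hu' : ‖u‖ ≠ 0 := by simpa using hu
  have ha : ‖(‖x‖⁻¹ • x)‖ = 1 := norm_smul_inv_norm hx
  have hb : ‖(‖u‖⁻¹ • u)‖ = 1 := norm_smul_inv_norm hu
  have hab : ⟪‖x‖⁻¹ • x, ‖u‖⁻¹ • u⟫_ℝ = 0 := by
    rw [real_inner_smul_left, real_inner_smul_right, hxu]; ring
  have habJ : ⟪‖x‖⁻¹ • x, J (‖u‖⁻¹ • u)⟫_ℝ = 0 := by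
    rw [map_smul, real_inner_smul_left, real_inner_smul_right, hxJu]; ring
  have key := hν _ _ ha hb hab habJ
  rw [act_smul1 hR, act_smul2 hR, act_smul3 hR, act_smul4 hR] at key
  field_simp at key
  nlinarith [key]

lemma eqA (hR : IsACT R) (hJ2 : ∀ x, J (J x) = -x)
    (hJiso : ∀ x y, ⟪J x, J y⟫_ℝ = ⟪x, y⟫_ℝ)
    (hν : ∀ x y : V, ‖x‖ = 1 → ‖y‖ = 1 → ⟪x, y⟫_ℝ = 0 → ⟪x, J y⟫_ℝ = 0 → R x y y x = ν)
    (x u : V) (hx : ‖x‖ = 1) (hu : ‖u‖ = 1) (hxu : ⟪x, u⟫_ℝ = 0) (hxJu : ⟪x, J u⟫_ℝ = 0) :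
    R x (J x) (J x) x + R u (J u) (J u) u
      + 2 * R x (J x) u (J u) - 2 * R x (J u) (J x) u = 2 * ν := by
  have hxx : ⟪x, x⟫_ℝ = 1 := by rw [real_inner_self_eq_norm_mul_norm, hx]; norm_num
  have huu : ⟪u, u⟫_ℝ = 1 := by rw [real_inner_self_eq_norm_mul_norm, hu]; norm_num
  have hux : ⟪u, x⟫_ℝ = 0 := by rw [real_inner_comm]; exact hxu
  have hJux : ⟪J u, x⟫_ℝ = 0 := by rw [real_inner_comm]; exact hxJu
  have hJxu : ⟪J x, u⟫_ℝ = 0 := by rw [J_skew J hJ2 hJiso, hxJu]; ring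
  have huJx : ⟪u, J x⟫_ℝ = 0 := by rw [real_inner_comm]; exact hJxu
  have hJxJu : ⟪J x, J u⟫_ℝ = 0 := by rw [hJiso]; exact hxu
  have hJuJx : ⟪J u, J x⟫_ℝ = 0 := by rw [real_inner_comm]; exact hJxJu
  have hxJx : ⟪x, J x⟫_ℝ = 0 := J_inner_self J hJ2 hJiso x
  have hJxx : ⟪J x, x⟫_ℝ = 0 := by rw [real_inner_comm]; exact hxJx
  have huJu : ⟪u, J u⟫_ℝ = 0 := J_inner_self J hJ2 hJiso u
  have hJuu : ⟪J u, u⟫_ℝ = 0 := by rw [real_inner_comm]; exact huJu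
  have hJxJx : ⟪J x, J x⟫_ℝ = 1 := by rw [hJiso]; exact hxx
  have hJuJu : ⟪J u, J u⟫_ℝ = 1 := by rw [hJiso]; exact huu
  have hnJx : ‖J x‖ = 1 := by rw [J_norm J hJ2 hJiso, hx]
  have hnJu : ‖J u‖ = 1 := by rw [J_norm J hJ2 hJiso, hu]
  -- plane 1 : (x+u, Jx−Ju)
  have hn1 : ‖x + u‖ ^ 2 = 2 := by
    rw [norm_add_sq_real, hxu]; rw [hx, hu]; norm_num
  have hn2 : ‖J x - J u‖ ^ 2 = 2 := by
    rw [norm_sub_sq_real, hJxJu]; rw [hnJx, hnJu]; norm_num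
  have hp1 : ⟪x + u, J x - J u⟫_ℝ = 0 := by
    simp only [inner_add_left, inner_sub_right, hxJx, hxJu, huJx, huJu]; ring
  have hp1' : ⟪x + u, J (J x - J u)⟫_ℝ = 0 := by
    rw [map_sub, hJ2, hJ2]
    simp only [inner_add_left, inner_sub_right, inner_neg_right, hxx, hxu, hux, huu]; ring
  have T1 := nu_scaled hR hν (x + u) (J x - J u) hp1 hp1'
  rw [hn1, hn2] at T1
  -- plane 2 : (x−u, Jx+Ju)
  have hn3 : ‖x - u‖ ^ 2 = 2 := by
    rw [norm_sub_sq_real, hxu]; rw [hx, hu]; norm_num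
  have hn4 : ‖J x + J u‖ ^ 2 = 2 := by
    rw [norm_add_sq_real, hJxJu]; rw [hnJx, hnJu]; norm_num
  have hp2 : ⟪x - u, J x + J u⟫_ℝ = 0 := by
    simp only [inner_sub_left, inner_add_right, hxJx, hxJu, huJx, huJu]; ring
  have hp2' : ⟪x - u, J (J x + J u)⟫_ℝ = 0 := by
    rw [map_add, hJ2, hJ2]
    simp only [inner_sub_left, inner_add_right, inner_neg_right, hxx, hxu, hux, huu]; ring
  have T2 := nu_scaled hR hν (x - u) (J x + J u) hp2 hp2'
  rw [hn3, hn4] at T2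
  simp only [sub_eq_add_neg, act_add1 hR, act_add2 hR, act_add3 hR, act_add4 hR,
    act_neg1 hR, act_neg2 hR, act_neg3 hR, act_neg4 hR] at T1 T2
  have he2 : R x (J u) (J u) x = ν := by
    refine hν x (J u) hx hnJu hxJu ?_
    rw [hJ2, inner_neg_right, hxu]; ring
  have he3 : R u (J x) (J x) u = ν := by
    refine hν u (J x) hu hnJx huJx ?_
    rw [hJ2, inner_neg_right, hux]; ring
  have ho1 : R x (J x) (J u) u = -R x (J x) u (J u) := act_a34 hR x (J x) (J u) u
  have ho3 : R u (J x) (J u) x = R x (J u) (J x) u := by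
    rw [act_pair hR u (J x) (J u) x, act_flip hR (J u) x u (J x)]
  have ho4 : R u (J u) (J x) x = R x (J x) (J u) u := by
    rw [act_pair hR u (J u) (J x) x, act_flip hR (J x) x u (J u)]
  linarith [T1, T2, he2, he3, ho1, ho3, ho4]

end curv

section curv2
variable {J : V →ₗ[ℝ] V} {R : V → V → V → V → ℝ} {ν : ℝ}

lemma eqC (hR : IsACT R) (h3 : Id3 J R) (hJ2 : ∀ x, J (J x) = -x)
    (hJiso : ∀ x y, ⟪J x, J y⟫_ℝ = ⟪x, y⟫_ℝ)
    (hν : ∀ x y : V, ‖x‖ = 1 → ‖y‖ = 1 → ⟪x, y⟫_ℝ = 0 → ⟪x, J y⟫_ℝ = 0 → R x y y x = ν)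
    (x u : V) (hx : ‖x‖ = 1) (hu : ‖u‖ = 1) (hxu : ⟪x, u⟫_ℝ = 0) (hxJu : ⟪x, J u⟫_ℝ = 0) :
    R x (J x) (J x) x + R u (J u) (J u) u
      + 2 * R x (J x) u (J u) + 2 * R x u (J x) (J u) = 2 * ν := by
  have hxx : ⟪x, x⟫_ℝ = 1 := by rw [real_inner_self_eq_norm_mul_norm, hx]; norm_num
  have huu : ⟪u, u⟫_ℝ = 1 := by rw [real_inner_self_eq_norm_mul_norm, hu]; norm_num
  have hux : ⟪u, x⟫_ℝ = 0 := by rw [real_inner_comm]; exact hxu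
  have hJux : ⟪J u, x⟫_ℝ = 0 := by rw [real_inner_comm]; exact hxJu
  have hJxu : ⟪J x, u⟫_ℝ = 0 := by rw [J_skew J hJ2 hJiso, hxJu]; ring
  have huJx : ⟪u, J x⟫_ℝ = 0 := by rw [real_inner_comm]; exact hJxu
  have hJxJu : ⟪J x, J u⟫_ℝ = 0 := by rw [hJiso]; exact hxu
  have hJuJx : ⟪J u, J x⟫_ℝ = 0 := by rw [real_inner_comm]; exact hJxJu
  have hxJx : ⟪x, J x⟫_ℝ = 0 := J_inner_self J hJ2 hJiso x
  have hJxx : ⟪J x, x⟫_ℝ = 0 := by rw [real_inner_comm]; exact hxJx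
  have huJu : ⟪u, J u⟫_ℝ = 0 := J_inner_self J hJ2 hJiso u
  have hJuu : ⟪J u, u⟫_ℝ = 0 := by rw [real_inner_comm]; exact huJu
  have hJxJx : ⟪J x, J x⟫_ℝ = 1 := by rw [hJiso]; exact hxx
  have hJuJu : ⟪J u, J u⟫_ℝ = 1 := by rw [hJiso]; exact huu
  have hnJx : ‖J x‖ = 1 := by rw [J_norm J hJ2 hJiso, hx]
  have hnJu : ‖J u‖ = 1 := by rw [J_norm J hJ2 hJiso, hu]
  -- plane 1 : (x + Ju, Jx + u)
  have hn1 : ‖x + J u‖ ^ 2 = 2 := by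
    rw [norm_add_sq_real, hxJu]; rw [hx, hnJu]; norm_num
  have hn2 : ‖J x + u‖ ^ 2 = 2 := by
    rw [norm_add_sq_real, hJxu]; rw [hnJx, hu]; norm_num
  have hp1 : ⟪x + J u, J x + u⟫_ℝ = 0 := by
    simp only [inner_add_left, inner_add_right, hxJx, hxu, hJuJx, hJuu]; ring
  have hp1' : ⟪x + J u, J (J x + u)⟫_ℝ = 0 := by
    rw [map_add, hJ2]
    simp only [inner_add_left, inner_add_right, inner_neg_right, hxx, hxJu, hJux, hJuJu]; ring
  have T1 := nu_scaled hR hν (x + J u) (J x + u) hp1 hp1'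
  rw [hn1, hn2] at T1
  -- plane 2 : (x − Ju, Jx − u)
  have hn3 : ‖x - J u‖ ^ 2 = 2 := by
    rw [norm_sub_sq_real, hxJu]; rw [hx, hnJu]; norm_num
  have hn4 : ‖J x - u‖ ^ 2 = 2 := by
    rw [norm_sub_sq_real, hJxu]; rw [hnJx, hu]; norm_num
  have hp2 : ⟪x - J u, J x - u⟫_ℝ = 0 := by
    simp only [inner_sub_left, inner_sub_right, hxJx, hxu, hJuJx, hJuu]; ring
  have hp2' : ⟪x - J u, J (J x - u)⟫_ℝ = 0 := by
    rw [map_sub, hJ2]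
    simp only [inner_sub_left, inner_sub_right, inner_neg_right, hxx, hxJu, hJux, hJuJu]; ring
  have T2 := nu_scaled hR hν (x - J u) (J x - u) hp2 hp2'
  rw [hn3, hn4] at T2
  simp only [sub_eq_add_neg, act_add1 hR, act_add2 hR, act_add3 hR, act_add4 hR,
    act_neg1 hR, act_neg2 hR, act_neg3 hR, act_neg4 hR] at T1 T2
  have hc1 : R x u u x = ν := hν x u hx hu hxu hxJu
  have hc2 : R (J u) (J x) (J x) (J u) = ν := by
    rw [← h3 u x x u]
    refine hν u x hu hx hux ?_
    rw [real_inner_comm]; exact hJxu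
  have hc3 : R (J u) u u (J u) = R u (J u) (J u) u := act_flip hR (J u) u u (J u)
  have hc4 : R (J u) (J x) u x = R x u (J x) (J u) := by
    rw [act_pair hR (J u) (J x) u x, act_flip hR u x (J u) (J x)]
  have hc5 : R (J u) u (J x) x = R x (J x) u (J u) := by
    rw [act_pair hR (J u) u (J x) x, act_flip hR (J x) x (J u) u]
  linarith [T1, T2, hc1, hc2, hc3, hc4, hc5]

lemma eqB (hR : IsACT R) (h3 : Id3 J R) (hJ2 : ∀ x, J (J x) = -x) (x u : V) :
    R x u (J x) (J u) - R x (J u) (J x) u = R x (J x) u (J u) := by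
  have hb := act_bianchi hR x (J x) (J u) u
  have t1 : R x (J x) (J u) u = -R x (J x) u (J u) := act_a34 hR x (J x) (J u) u
  have t2 : R (J x) (J u) x u = R x u (J x) (J u) := by
    have h := h3 x u (J x) (J u)
    rw [hJ2, hJ2, act_neg3 hR, act_neg4 hR] at h
    linarith
  have t3 : R (J u) x (J x) u = -R x (J u) (J x) u := act_a12 hR (J u) x (J x) u
  linarith

/-- Key identity (★): `k(x) + k(u) + 3R(x,Jx,u,Ju) = 2ν`. -/
lemma star_id (hR : IsACT R) (h3 : Id3 J R) (hJ2 : ∀ x, J (J x) = -x)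
    (hJiso : ∀ x y, ⟪J x, J y⟫_ℝ = ⟪x, y⟫_ℝ)
    (hν : ∀ x y : V, ‖x‖ = 1 → ‖y‖ = 1 → ⟪x, y⟫_ℝ = 0 → ⟪x, J y⟫_ℝ = 0 → R x y y x = ν)
    (x u : V) (hx : ‖x‖ = 1) (hu : ‖u‖ = 1) (hxu : ⟪x, u⟫_ℝ = 0) (hxJu : ⟪x, J u⟫_ℝ = 0) :
    R x (J x) (J x) x + R u (J u) (J u) u + 3 * R x (J x) u (J u) = 2 * ν := by
  have hA := eqA hR hJ2 hJiso hν x u hx hu hxu hxJu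
  have hC := eqC hR h3 hJ2 hJiso hν x u hx hu hxu hxJu
  have hB := eqB hR h3 hJ2 x u
  linarith

/-- The term in the ⋆-Ricci trace: `R(y,e,Je,Jy) = (k(y)+k(e)−2ν)/6`. -/
lemma sterm (hR : IsACT R) (h3 : Id3 J R) (hJ2 : ∀ x, J (J x) = -x)
    (hJiso : ∀ x y, ⟪J x, J y⟫_ℝ = ⟪x, y⟫_ℝ)
    (hν : ∀ x y : V, ‖x‖ = 1 → ‖y‖ = 1 → ⟪x, y⟫_ℝ = 0 → ⟪x, J y⟫_ℝ = 0 → R x y y x = ν)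
    (x u : V) (hx : ‖x‖ = 1) (hu : ‖u‖ = 1) (hxu : ⟪x, u⟫_ℝ = 0) (hxJu : ⟪x, J u⟫_ℝ = 0) :
    R x u (J u) (J x)
      = (R x (J x) (J x) x + R u (J u) (J u) u - 2 * ν) / 6 := by
  have hA := eqA hR hJ2 hJiso hν x u hx hu hxu hxJu
  have hC := eqC hR h3 hJ2 hJiso hν x u hx hu hxu hxJu
  have hB := eqB hR h3 hJ2 x u
  have hb := act_bianchi hR x u (J u) (J x)
  have t2 : R u (J u) x (J x) = R x (J x) u (J u) := act_pair hR u (J u) x (J x)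
  have t3 : R (J u) x u (J x) = R x (J u) (J x) u := act_flip hR (J u) x u (J x)
  linarith

lemma kJ (hR : IsACT R) (hJ2 : ∀ x, J (J x) = -x) (x : V) :
    R (J x) (J (J x)) (J (J x)) (J x) = R x (J x) (J x) x := by
  rw [hJ2, act_neg2 hR, act_neg3 hR, neg_neg, act_flip hR (J x) x]

end curv2

section ext

lemma exists_adapted_basis {n : ℕ} [FiniteDimensional ℝ V] (hn : Module.finrank ℝ V = n)
    (i0 i1 i2 i3 : Fin n) (h01 : i0 ≠ i1) (h02 : i0 ≠ i2) (h03 : i0 ≠ i3)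
    (h12 : i1 ≠ i2) (h13 : i1 ≠ i3) (h23 : i2 ≠ i3)
    (w : Fin 4 → V) (hw : Orthonormal ℝ w) :
    ∃ c : OrthonormalBasis (Fin n) ℝ V,
      c i0 = w 0 ∧ c i1 = w 1 ∧ c i2 = w 2 ∧ c i3 = w 3 := by
  classical
  set v : Fin n → V := fun i =>
    if i = i0 then w 0 else if i = i1 then w 1 else if i = i2 then w 2 else w 3 with hvd
  have hv0 : v i0 = w 0 := by simp only [hvd]; simp
  have hv1 : v i1 = w 1 := by
    simp only [hvd]; rw [if_neg (Ne.symm h01)]; simp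
  have hv2 : v i2 = w 2 := by
    simp only [hvd]; rw [if_neg (Ne.symm h02), if_neg (Ne.symm h12)]; simp
  have hv3 : v i3 = w 3 := by
    simp only [hvd]; rw [if_neg (Ne.symm h03), if_neg (Ne.symm h13), if_neg (Ne.symm h23)]
  have honb : Orthonormal ℝ (Set.restrict ({i0, i1, i2, i3} : Set (Fin n)) v) := by
    rw [orthonormal_iff_ite]
    rintro ⟨i, hi⟩ ⟨j, hj⟩
    have hi' : i = i0 ∨ i = i1 ∨ i = i2 ∨ i = i3 := by simpa [Set.mem_insert_iff] using hi
    have hj' : j = i0 ∨ j = i1 ∨ j = i2 ∨ j = i3 := by simpa [Set.mem_insert_iff] using hj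
    have key : ∀ (a b : Fin 4), v i = w a → v j = w b → (i = j ↔ a = b) →
        ⟪Set.restrict _ v ⟨i, hi⟩, Set.restrict _ v ⟨j, hj⟩⟫_ℝ
          = if (⟨i, hi⟩ : {x // x ∈ ({i0, i1, i2, i3} : Set (Fin n))}) = ⟨j, hj⟩ then 1 else 0 := by
      intro a b hva hvb hiff
      have hr : ∀ x (hx : x ∈ ({i0, i1, i2, i3} : Set (Fin n))),
          Set.restrict ({i0, i1, i2, i3} : Set (Fin n)) v ⟨x, hx⟩ = v x := fun _ _ => rfl
      rw [hr, hr, hva, hvb]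
      have := (orthonormal_iff_ite.mp hw) a b
      rw [this]
      by_cases h : i = j
      · rw [if_pos (hiff.mp h), if_pos (by exact Subtype.ext h)]
      · rw [if_neg (fun hc => h (hiff.mpr hc)),
          if_neg (fun hc => h (by injection hc))]
    rcases hi' with rfl | rfl | rfl | rfl <;> rcases hj' with rfl | rfl | rfl | rfl
    · exact key 0 0 hv0 hv0 (by simp)
    · exact key 0 1 hv0 hv1 (iff_of_false h01 (by decide))
    · exact key 0 2 hv0 hv2 (iff_of_false h02 (by decide))
    · exact key 0 3 hv0 hv3 (iff_of_false h03 (by decide))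
    · exact key 1 0 hv1 hv0 (iff_of_false h01.symm (by decide))
    · exact key 1 1 hv1 hv1 (by simp)
    · exact key 1 2 hv1 hv2 (iff_of_false h12 (by decide))
    · exact key 1 3 hv1 hv3 (iff_of_false h13 (by decide))
    · exact key 2 0 hv2 hv0 (iff_of_false h02.symm (by decide))
    · exact key 2 1 hv2 hv1 (iff_of_false h12.symm (by decide))
    · exact key 2 2 hv2 hv2 (by simp)
    · exact key 2 3 hv2 hv3 (iff_of_false h23 (by decide))
    · exact key 3 0 hv3 hv0 (iff_of_false h03.symm (by decide))
    · exact key 3 1 hv3 hv1 (iff_of_false h13.symm (by decide))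
    · exact key 3 2 hv3 hv2 (iff_of_false h23.symm (by decide))
    · exact key 3 3 hv3 hv3 (by simp)
  obtain ⟨c, hc⟩ := honb.exists_orthonormalBasis_extension_of_card_eq
    (by rw [hn, Fintype.card_fin])
  refine ⟨c, ?_, ?_, ?_, ?_⟩
  · rw [hc i0 (by simp), hv0]
  · rw [hc i1 (by simp), hv1]
  · rw [hc i2 (by simp), hv2]
  · rw [hc i3 (by simp), hv3]

end ext

section core
set_option maxHeartbeats 1000000
variable {J : V →ₗ[ℝ] V} {R : V → V → V → V → ℝ} {ν : ℝ}

lemma core (m : ℕ) (hm : 3 ≤ m) (b : OrthonormalBasis (Fin (2 * m)) ℝ V)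
    (hR : IsACT R) (h3 : Id3 J R) (hJ2 : ∀ x, J (J x) = -x)
    (hJiso : ∀ x y, ⟪J x, J y⟫_ℝ = ⟪x, y⟫_ℝ)
    (hν : ∀ x y : V, ‖x‖ = 1 → ‖y‖ = 1 → ⟪x, y⟫_ℝ = 0 → ⟪x, J y⟫_ℝ = 0 → R x y y x = ν)
    (p q : V) (hp : ‖p‖ = 1) (hq : ‖q‖ = 1) (hpq : ⟪p, q⟫_ℝ = 0) (hpJq : ⟪p, J q⟫_ℝ = 0) :
    ((m : ℝ) + 1) * (∑ i, R (b i) p p (b i)) - 3 * (∑ i, R p (b i) (J (b i)) (J p))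
      = ((m : ℝ) + 1) * (∑ i, R (b i) q q (b i)) - 3 * (∑ i, R q (b i) (J (b i)) (J q)) := by
  classical
  haveI : FiniteDimensional ℝ V := Module.Finite.of_basis b.toBasis
  have hrank : Module.finrank ℝ V = 2 * m := by
    rw [Module.finrank_eq_card_basis b.toBasis, Fintype.card_fin]
  -- inner product battery
  have hpp : ⟪p, p⟫_ℝ = 1 := by rw [real_inner_self_eq_norm_mul_norm, hp]; norm_num
  have hqq : ⟪q, q⟫_ℝ = 1 := by rw [real_inner_self_eq_norm_mul_norm, hq]; norm_num
  have hqp : ⟪q, p⟫_ℝ = 0 := by rw [real_inner_comm]; exact hpq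
  have hJqp : ⟪J q, p⟫_ℝ = 0 := by rw [real_inner_comm]; exact hpJq
  have hJpq : ⟪J p, q⟫_ℝ = 0 := by rw [J_skew J hJ2 hJiso, hpJq]; ring
  have hqJp : ⟪q, J p⟫_ℝ = 0 := by rw [real_inner_comm]; exact hJpq
  have hJpJq : ⟪J p, J q⟫_ℝ = 0 := by rw [hJiso]; exact hpq
  have hJqJp : ⟪J q, J p⟫_ℝ = 0 := by rw [real_inner_comm]; exact hJpJq
  have hpJp : ⟪p, J p⟫_ℝ = 0 := J_inner_self J hJ2 hJiso p
  have hJpp : ⟪J p, p⟫_ℝ = 0 := by rw [real_inner_comm]; exact hpJp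
  have hqJq : ⟪q, J q⟫_ℝ = 0 := J_inner_self J hJ2 hJiso q
  have hJqq : ⟪J q, q⟫_ℝ = 0 := by rw [real_inner_comm]; exact hqJq
  have hJpJp : ⟪J p, J p⟫_ℝ = 1 := by rw [hJiso]; exact hpp
  have hJqJq : ⟪J q, J q⟫_ℝ = 1 := by rw [hJiso]; exact hqq
  have hnJp : ‖J p‖ = 1 := by rw [J_norm J hJ2 hJiso, hp]
  have hnJq : ‖J q‖ = 1 := by rw [J_norm J hJ2 hJiso, hq]
  -- distinguished indices
  have h2m : 6 ≤ 2 * m := by omega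
  set i0 : Fin (2 * m) := ⟨0, by omega⟩ with hi0d
  set i1 : Fin (2 * m) := ⟨1, by omega⟩ with hi1d
  set i2 : Fin (2 * m) := ⟨2, by omega⟩ with hi2d
  set i3 : Fin (2 * m) := ⟨3, by omega⟩ with hi3d
  have h01 : i0 ≠ i1 := by simp [hi0d, hi1d, Fin.ext_iff]
  have h02 : i0 ≠ i2 := by simp [hi0d, hi2d, Fin.ext_iff]
  have h03 : i0 ≠ i3 := by simp [hi0d, hi3d, Fin.ext_iff]
  have h12 : i1 ≠ i2 := by simp [hi1d, hi2d, Fin.ext_iff]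
  have h13 : i1 ≠ i3 := by simp [hi1d, hi3d, Fin.ext_iff]
  have h23 : i2 ≠ i3 := by simp [hi2d, hi3d, Fin.ext_iff]
  have horth : Orthonormal ℝ ![p, J p, q, J q] := by
    rw [orthonormal_iff_ite]
    intro a b'
    fin_cases a <;> fin_cases b' <;>
      simp [hpp, hqq, hpq, hqp, hpJq, hJqp, hJpq, hqJp, hJpJq, hJqJp, hpJp, hJpp,
        hqJq, hJqq, hJpJp, hJqJq, hp, hq, hnJp, hnJq]
  obtain ⟨c, hc0, hc1, hc2, hc3⟩ :=
    exists_adapted_basis hrank i0 i1 i2 i3 h01 h02 h03 h12 h13 h23 _ horth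
  rw [show (![p, J p, q, J q] : Fin 4 → V) 0 = p from rfl] at hc0
  rw [show (![p, J p, q, J q] : Fin 4 → V) 1 = J p from rfl] at hc1
  rw [show (![p, J p, q, J q] : Fin 4 → V) 2 = q from rfl] at hc2
  rw [show (![p, J p, q, J q] : Fin 4 → V) 3 = J q from rfl] at hc3
  -- trace transport
  have htrS : ∀ y : V, (∑ i, R (b i) y y (b i)) = ∑ i, R (c i) y y (c i) := by
    intro y
    exact trace_indep b c (fun a a' => R a y y a')
      (fun x x' z => act_add1 hR x x' y y z) (fun t x z => act_smul1 hR t x y y z)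
      (fun x z z' => act_add4 hR x y y z z') (fun t x z => act_smul4 hR t x y y z)
  have htrS' : ∀ y : V, (∑ i, R y (b i) (J (b i)) (J y)) = ∑ i, R y (c i) (J (c i)) (J y) := by
    intro y
    refine trace_indep b c (fun a a' => R y a (J a') (J y)) ?_ ?_ ?_ ?_
    · intro x x' z; exact act_add2 hR y x x' (J z) (J y)
    · intro t x z; exact act_smul2 hR t y x (J z) (J y)
    · intro x z z'
      show R y x (J (z + z')) (J y) = R y x (J z) (J y) + R y x (J z') (J y)
      rw [map_add]; exact act_add3 hR y x (J z) (J z') (J y)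
    · intro t x z
      show R y x (J (t • z)) (J y) = t * R y x (J z) (J y)
      rw [map_smul]; exact act_smul3 hR t y x (J z) (J y)
  -- splitting off the four indices
  obtain ⟨F, hFd⟩ : ∃ F : Finset (Fin (2 * m)), F = {i0, i1, i2, i3} := ⟨_, rfl⟩
  have hnm0 : i0 ∉ ({i1, i2, i3} : Finset (Fin (2 * m))) := by simp [h01, h02, h03]
  have hnm1 : i1 ∉ ({i2, i3} : Finset (Fin (2 * m))) := by simp [h12, h13]
  have hnm2 : i2 ∉ ({i3} : Finset (Fin (2 * m))) := by simp [h23]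
  have hsplit : ∀ f : Fin (2 * m) → ℝ,
      ∑ i, f i = (∑ i ∈ Finset.univ \ F, f i) + (f i0 + f i1 + f i2 + f i3) := by
    intro f
    rw [← Finset.sum_sdiff (Finset.subset_univ F)]
    congr 1
    rw [hFd, Finset.sum_insert hnm0, Finset.sum_insert hnm1, Finset.sum_insert hnm2,
      Finset.sum_singleton]
    ring
  have hcard : (Finset.univ \ F).card = 2 * m - 4 := by
    rw [Finset.card_sdiff_of_subset (Finset.subset_univ F), Finset.card_univ, Fintype.card_fin, hFd,
      Finset.card_insert_of_notMem hnm0, Finset.card_insert_of_notMem hnm1,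
      Finset.card_insert_of_notMem hnm2, Finset.card_singleton]
  have hcast : ((2 * m - 4 : ℕ) : ℝ) = 2 * (m : ℝ) - 4 := by
    have h4 : (4 : ℕ) ≤ 2 * m := by omega
    push_cast [h4]
    ring
  -- residual facts
  have hres : ∀ i ∈ Finset.univ \ F, ‖c i‖ = 1 ∧ ⟪c i, p⟫_ℝ = 0 ∧ ⟪c i, J p⟫_ℝ = 0 ∧
      ⟪c i, q⟫_ℝ = 0 ∧ ⟪c i, J q⟫_ℝ = 0 := by
    intro i hi
    have hiF : i ∉ F := (Finset.mem_sdiff.mp hi).2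
    rw [hFd] at hiF
    simp only [Finset.mem_insert, Finset.mem_singleton] at hiF
    push_neg at hiF
    obtain ⟨n0, n1, n2, n3⟩ := hiF
    exact ⟨c.orthonormal.1 i, hc0 ▸ c.orthonormal.2 n0, hc1 ▸ c.orthonormal.2 n1,
      hc2 ▸ c.orthonormal.2 n2, hc3 ▸ c.orthonormal.2 n3⟩
  -- Ricci sums
  have hresS_p : ∑ i ∈ Finset.univ \ F, R (c i) p p (c i) = ((2 * m - 4 : ℕ) : ℝ) * ν := by
    have hterm : ∀ i ∈ Finset.univ \ F, R (c i) p p (c i) = ν := by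
      intro i hi
      obtain ⟨hn, h1, h2, _, _⟩ := hres i hi
      exact hν (c i) p hn hp h1 h2
    rw [Finset.sum_congr rfl hterm, Finset.sum_const, hcard, nsmul_eq_mul]
  have hresS_q : ∑ i ∈ Finset.univ \ F, R (c i) q q (c i) = ((2 * m - 4 : ℕ) : ℝ) * ν := by
    have hterm : ∀ i ∈ Finset.univ \ F, R (c i) q q (c i) = ν := by
      intro i hi
      obtain ⟨hn, _, _, h3', h4'⟩ := hres i hi
      exact hν (c i) q hn hq h3' h4'
    rw [Finset.sum_congr rfl hterm, Finset.sum_const, hcard, nsmul_eq_mul]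
  have hSp : (∑ i, R (c i) p p (c i))
      = ((2 * m - 4 : ℕ) : ℝ) * ν + (R p (J p) (J p) p + 2 * ν) := by
    rw [hsplit (fun i => R (c i) p p (c i))]
    beta_reduce
    rw [hresS_p]
    have e0 : R (c i0) p p (c i0) = 0 := by rw [hc0]; exact act_xx hR p p p
    have e1 : R (c i1) p p (c i1) = R p (J p) (J p) p := by
      rw [hc1]; exact act_flip hR (J p) p p (J p)
    have e2 : R (c i2) p p (c i2) = ν := by rw [hc2]; exact hν q p hq hp hqp hqJp
    have e3 : R (c i3) p p (c i3) = ν := by rw [hc3]; exact hν (J q) p hnJq hp hJqp hJqJp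
    rw [e0, e1, e2, e3]; ring
  have hSq : (∑ i, R (c i) q q (c i))
      = ((2 * m - 4 : ℕ) : ℝ) * ν + (R q (J q) (J q) q + 2 * ν) := by
    rw [hsplit (fun i => R (c i) q q (c i))]
    beta_reduce
    rw [hresS_q]
    have e0 : R (c i0) q q (c i0) = ν := by rw [hc0]; exact hν p q hp hq hpq hpJq
    have e1 : R (c i1) q q (c i1) = ν := by rw [hc1]; exact hν (J p) q hnJp hq hJpq hJpJq
    have e2 : R (c i2) q q (c i2) = 0 := by rw [hc2]; exact act_xx hR q q q
    have e3 : R (c i3) q q (c i3) = R q (J q) (J q) q := by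
      rw [hc3]; exact act_flip hR (J q) q q (J q)
    rw [e0, e1, e2, e3]; ring
  -- star-Ricci sums
  have hresS'_p : ∑ i ∈ Finset.univ \ F, R p (c i) (J (c i)) (J p)
      = ((2 * m - 4 : ℕ) : ℝ) * ((R p (J p) (J p) p - 2 * ν) / 6)
        + (∑ i ∈ Finset.univ \ F, R (c i) (J (c i)) (J (c i)) (c i)) / 6 := by
    have hterm : ∀ i ∈ Finset.univ \ F, R p (c i) (J (c i)) (J p)
        = (R p (J p) (J p) p - 2 * ν) / 6 + R (c i) (J (c i)) (J (c i)) (c i) / 6 := by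
      intro i hi
      obtain ⟨hn, h1, h2, _, _⟩ := hres i hi
      have hpc : ⟪p, c i⟫_ℝ = 0 := by rw [real_inner_comm]; exact h1
      have h2' : ⟪J p, c i⟫_ℝ = 0 := by rw [real_inner_comm]; exact h2
      have hpJc : ⟪p, J (c i)⟫_ℝ = 0 := by
        have hskew := J_skew J hJ2 hJiso p (c i)
        linarith
      rw [sterm hR h3 hJ2 hJiso hν p (c i) hp hn hpc hpJc]; ring
    rw [Finset.sum_congr rfl hterm, Finset.sum_add_distrib, Finset.sum_const, hcard,
      nsmul_eq_mul, ← Finset.sum_div]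
  have hresS'_q : ∑ i ∈ Finset.univ \ F, R q (c i) (J (c i)) (J q)
      = ((2 * m - 4 : ℕ) : ℝ) * ((R q (J q) (J q) q - 2 * ν) / 6)
        + (∑ i ∈ Finset.univ \ F, R (c i) (J (c i)) (J (c i)) (c i)) / 6 := by
    have hterm : ∀ i ∈ Finset.univ \ F, R q (c i) (J (c i)) (J q)
        = (R q (J q) (J q) q - 2 * ν) / 6 + R (c i) (J (c i)) (J (c i)) (c i) / 6 := by
      intro i hi
      obtain ⟨hn, _, _, h3', h4'⟩ := hres i hi
      have hqc : ⟪q, c i⟫_ℝ = 0 := by rw [real_inner_comm]; exact h3'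
      have h4'' : ⟪J q, c i⟫_ℝ = 0 := by rw [real_inner_comm]; exact h4'
      have hqJc : ⟪q, J (c i)⟫_ℝ = 0 := by
        have hskew := J_skew J hJ2 hJiso q (c i)
        linarith
      rw [sterm hR h3 hJ2 hJiso hν q (c i) hq hn hqc hqJc]; ring
    rw [Finset.sum_congr rfl hterm, Finset.sum_add_distrib, Finset.sum_const, hcard,
      nsmul_eq_mul, ← Finset.sum_div]
  have hS'p : (∑ i, R p (c i) (J (c i)) (J p))
      = ((2 * m - 4 : ℕ) : ℝ) * ((R p (J p) (J p) p - 2 * ν) / 6)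
        + (∑ i ∈ Finset.univ \ F, R (c i) (J (c i)) (J (c i)) (c i)) / 6
        + (R p (J p) (J p) p
          + 2 * ((R p (J p) (J p) p + R q (J q) (J q) q - 2 * ν) / 6)) := by
    rw [hsplit (fun i => R p (c i) (J (c i)) (J p))]
    beta_reduce
    rw [hresS'_p]
    have f0 : R p (c i0) (J (c i0)) (J p) = 0 := by rw [hc0]; exact act_xx hR p (J p) (J p)
    have f1 : R p (c i1) (J (c i1)) (J p) = R p (J p) (J p) p := by
      rw [hc1, hJ2 p, act_neg3 hR, act_a34 hR p (J p) p (J p), neg_neg]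
    have f2 : R p (c i2) (J (c i2)) (J p)
        = (R p (J p) (J p) p + R q (J q) (J q) q - 2 * ν) / 6 := by
      rw [hc2]; exact sterm hR h3 hJ2 hJiso hν p q hp hq hpq hpJq
    have f3 : R p (c i3) (J (c i3)) (J p)
        = (R p (J p) (J p) p + R q (J q) (J q) q - 2 * ν) / 6 := by
      rw [hc3]
      have hcond : ⟪p, J (J q)⟫_ℝ = 0 := by rw [hJ2 q, inner_neg_right, hpq, neg_zero]
      rw [sterm hR h3 hJ2 hJiso hν p (J q) hp hnJq hpJq hcond, kJ hR hJ2 q]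
    rw [f0, f1, f2, f3]; ring
  have hS'q : (∑ i, R q (c i) (J (c i)) (J q))
      = ((2 * m - 4 : ℕ) : ℝ) * ((R q (J q) (J q) q - 2 * ν) / 6)
        + (∑ i ∈ Finset.univ \ F, R (c i) (J (c i)) (J (c i)) (c i)) / 6
        + (R q (J q) (J q) q
          + 2 * ((R q (J q) (J q) q + R p (J p) (J p) p - 2 * ν) / 6)) := by
    rw [hsplit (fun i => R q (c i) (J (c i)) (J q))]
    beta_reduce
    rw [hresS'_q]
    have f0 : R q (c i0) (J (c i0)) (J q)
        = (R q (J q) (J q) q + R p (J p) (J p) p - 2 * ν) / 6 := by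
      rw [hc0]; exact sterm hR h3 hJ2 hJiso hν q p hq hp hqp hqJp
    have f1 : R q (c i1) (J (c i1)) (J q)
        = (R q (J q) (J q) q + R p (J p) (J p) p - 2 * ν) / 6 := by
      rw [hc1]
      have hcond : ⟪q, J (J p)⟫_ℝ = 0 := by rw [hJ2 p, inner_neg_right, hqp, neg_zero]
      rw [sterm hR h3 hJ2 hJiso hν q (J p) hq hnJp hqJp hcond, kJ hR hJ2 p]
    have f2 : R q (c i2) (J (c i2)) (J q) = 0 := by rw [hc2]; exact act_xx hR q (J q) (J q)
    have f3 : R q (c i3) (J (c i3)) (J q) = R q (J q) (J q) q := by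
      rw [hc3, hJ2 q, act_neg3 hR, act_a34 hR q (J q) q (J q), neg_neg]
    rw [f0, f1, f2, f3]; ring
  rw [htrS p, htrS q, htrS' p, htrS' q, hSp, hSq, hS'p, hS'q, hcast]
  ring

end core


set_option maxHeartbeats 1600000 in
/-- If `R` has constant antiholomorphic sectional curvature `ν`
and satisfies identity 3, then the Ricci tensor `S` and ⋆-Ricci tensor `S'`
satisfy `(m+1)S − 3S' = (1/(2m))((m+1)τ − 3τ') g`, where `τ, τ'` are the
traces of `S, S'`. -/
theorem stmt8 (m : ℕ) (hm : 3 ≤ m) (b : OrthonormalBasis (Fin (2 * m)) ℝ V)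
    (J : V →ₗ[ℝ] V) (hJ2 : ∀ x, J (J x) = -x)
    (hJiso : ∀ x y, ⟪J x, J y⟫_ℝ = ⟪x, y⟫_ℝ)
    (R : V → V → V → V → ℝ) (hR : IsACT R) (h3 : Id3 J R) (ν : ℝ)
    (hν : ∀ x y : V, ‖x‖ = 1 → ‖y‖ = 1 → ⟪x, y⟫_ℝ = 0 → ⟪x, J y⟫_ℝ = 0 →
      R x y y x = ν) :
    ∀ y z : V,
      ((m : ℝ) + 1) * (∑ i, R (b i) y z (b i))
          - 3 * (∑ i, R y (b i) (J (b i)) (J z)) =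
        (1 / (2 * (m : ℝ))) *
          (((m : ℝ) + 1) * (∑ i, ∑ j, R (b j) (b i) (b i) (b j))
            - 3 * (∑ i, ∑ j, R (b i) (b j) (J (b j)) (J (b i)))) * ⟪y, z⟫_ℝ := by
  classical
  intro y z
  haveI : FiniteDimensional ℝ V := Module.Finite.of_basis b.toBasis
  have hrank : Module.finrank ℝ V = 2 * m := by
    rw [Module.finrank_eq_card_basis b.toBasis, Fintype.card_fin]
  obtain ⟨A, hA⟩ : ∃ A : V → V → ℝ, ∀ p q, A p q
      = ((m : ℝ) + 1) * (∑ i, R (b i) p q (b i))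
        - 3 * (∑ i, R p (b i) (J (b i)) (J q)) := ⟨_, fun _ _ => rfl⟩
  -- linearity of the two trace sums
  have SA1 : ∀ p p' q : V, (∑ i, R (b i) (p + p') q (b i))
      = (∑ i, R (b i) p q (b i)) + (∑ i, R (b i) p' q (b i)) := by
    intro p p' q
    rw [← Finset.sum_add_distrib]
    exact Finset.sum_congr rfl fun i _ => act_add2 hR (b i) p p' q (b i)
  have SA2 : ∀ p q q' : V, (∑ i, R (b i) p (q + q') (b i))
      = (∑ i, R (b i) p q (b i)) + (∑ i, R (b i) p q' (b i)) := by
    intro p q q'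
    rw [← Finset.sum_add_distrib]
    exact Finset.sum_congr rfl fun i _ => act_add3 hR (b i) p q q' (b i)
  have SM1 : ∀ (t : ℝ) (p q : V), (∑ i, R (b i) (t • p) q (b i))
      = t * ∑ i, R (b i) p q (b i) := by
    intro t p q
    rw [Finset.mul_sum]
    exact Finset.sum_congr rfl fun i _ => act_smul2 hR t (b i) p q (b i)
  have SM2 : ∀ (t : ℝ) (p q : V), (∑ i, R (b i) p (t • q) (b i))
      = t * ∑ i, R (b i) p q (b i) := by
    intro t p q
    rw [Finset.mul_sum]
    exact Finset.sum_congr rfl fun i _ => act_smul3 hR t (b i) p q (b i)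
  have S'A1 : ∀ p p' q : V, (∑ i, R (p + p') (b i) (J (b i)) (J q))
      = (∑ i, R p (b i) (J (b i)) (J q)) + (∑ i, R p' (b i) (J (b i)) (J q)) := by
    intro p p' q
    rw [← Finset.sum_add_distrib]
    exact Finset.sum_congr rfl fun i _ => act_add1 hR p p' (b i) (J (b i)) (J q)
  have S'A2 : ∀ p q q' : V, (∑ i, R p (b i) (J (b i)) (J (q + q')))
      = (∑ i, R p (b i) (J (b i)) (J q)) + (∑ i, R p (b i) (J (b i)) (J q')) := by
    intro p q q'
    rw [← Finset.sum_add_distrib, map_add]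
    exact Finset.sum_congr rfl fun i _ => act_add4 hR p (b i) (J (b i)) (J q) (J q')
  have S'M1 : ∀ (t : ℝ) (p q : V), (∑ i, R (t • p) (b i) (J (b i)) (J q))
      = t * ∑ i, R p (b i) (J (b i)) (J q) := by
    intro t p q
    rw [Finset.mul_sum]
    exact Finset.sum_congr rfl fun i _ => act_smul1 hR t p (b i) (J (b i)) (J q)
  have S'M2 : ∀ (t : ℝ) (p q : V), (∑ i, R p (b i) (J (b i)) (J (t • q)))
      = t * ∑ i, R p (b i) (J (b i)) (J q) := by
    intro t p q
    rw [Finset.mul_sum, map_smul]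
    exact Finset.sum_congr rfl fun i _ => act_smul4 hR t p (b i) (J (b i)) (J q)
  -- symmetry of the two trace sums
  have Ssym : ∀ p q : V, (∑ i, R (b i) p q (b i)) = ∑ i, R (b i) q p (b i) := by
    intro p q
    refine Finset.sum_congr rfl fun i _ => ?_
    rw [act_pair hR (b i) p q (b i), act_flip hR q (b i) (b i) p]
  have S'sym : ∀ p q : V, (∑ i, R p (b i) (J (b i)) (J q)) = ∑ i, R q (b i) (J (b i)) (J p) := by
    intro p q
    refine Finset.sum_congr rfl fun i _ => ?_
    have h := h3 p (b i) (J (b i)) (J q)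
    rw [hJ2, hJ2, act_neg3 hR, act_neg4 hR, neg_neg] at h
    rw [h, act_pair hR (J p) (J (b i)) (b i) q, act_flip hR (b i) q (J p) (J (b i))]
  -- symmetry and quadratic properties of `A`
  have hAsym : ∀ p q, A p q = A q p := by
    intro p q
    rw [hA, hA, Ssym, S'sym]
  have hAsmul : ∀ (t : ℝ) (p : V), A (t • p) (t • p) = t ^ 2 * A p p := by
    intro t p
    rw [hA, hA, SM1, SM2, S'M1, S'M2]
    ring
  have hAzero : A 0 0 = 0 := by
    rw [hA]
    have h1 : (∑ i, R (b i) (0 : V) 0 (b i)) = 0 := by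
      have := SM1 0 0 0
      simpa using this
    have h2 : (∑ i, R (0 : V) (b i) (J (b i)) (J (0 : V))) = 0 := by
      have := S'M1 0 0 0
      simpa using this
    rw [h1, h2]
    ring
  have hAexp : ∀ p q, A (p + q) (p + q) = A p p + A p q + A q p + A q q := by
    intro p q
    rw [hA, hA, hA, hA, hA, SA1, SA2, SA2, S'A1, S'A2, S'A2]
    ring
  -- the distinguished unit vector
  have h2m : 6 ≤ 2 * m := by omega
  obtain ⟨w0, hw0u⟩ : ∃ w0 : V, ‖w0‖ = 1 :=
    ⟨b ⟨0, by omega⟩, b.orthonormal.1 _⟩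
  -- `A` is constant on the unit sphere
  have hcore : ∀ p q : V, ‖p‖ = 1 → ‖q‖ = 1 → ⟪p, q⟫_ℝ = 0 → ⟪p, J q⟫_ℝ = 0 →
      A p p = A q q := by
    intro p q hp hq h1 h2
    rw [hA, hA]
    exact core m hm b hR h3 hJ2 hJiso hν p q hp hq h1 h2
  have hAunit : ∀ p : V, ‖p‖ = 1 → A p p = A w0 w0 := by
    intro p hp
    -- find a unit vector orthogonal (and J-orthogonal) to both p and w0
    obtain ⟨w, hwu, hw1, hw2, hw3, hw4⟩ : ∃ w : V, ‖w‖ = 1 ∧ ⟪p, w⟫_ℝ = 0 ∧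
        ⟪p, J w⟫_ℝ = 0 ∧ ⟪w0, w⟫_ℝ = 0 ∧ ⟪w0, J w⟫_ℝ = 0 := by
      set K : Submodule ℝ V := Submodule.span ℝ (Set.range ![p, J p, w0, J w0]) with hKd
      have hKfr : Module.finrank ℝ K ≤ 4 := by
        refine le_trans (finrank_span_le_card _) ?_
        rw [Set.toFinset_range]
        exact le_trans (Finset.card_image_le) (by simp)
      have hne : Kᗮ ≠ ⊥ := by
        intro hbot
        have := Submodule.finrank_add_finrank_orthogonal K
        rw [hbot, finrank_bot, hrank] at this
        omega
      obtain ⟨w', hw'K, hw'0⟩ := Submodule.exists_mem_ne_zero_of_ne_bot hne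
      have hmem : ∀ k : Fin 4, (![p, J p, w0, J w0] : Fin 4 → V) k ∈ K :=
        fun k => Submodule.subset_span ⟨k, rfl⟩
      have hii : ∀ v : V, v ∈ K → ⟪v, ‖w'‖⁻¹ • w'⟫_ℝ = 0 :=
        fun v hv => Submodule.inner_right_of_mem_orthogonal hv (Kᗮ.smul_mem _ hw'K)
      have hip : ⟪p, ‖w'‖⁻¹ • w'⟫_ℝ = 0 := hii _ (hmem 0)
      have hiJp : ⟪J p, ‖w'‖⁻¹ • w'⟫_ℝ = 0 := hii _ (hmem 1)
      have hiw0 : ⟪w0, ‖w'‖⁻¹ • w'⟫_ℝ = 0 := hii _ (hmem 2)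
      have hiJw0 : ⟪J w0, ‖w'‖⁻¹ • w'⟫_ℝ = 0 := hii _ (hmem 3)
      have hsk1 := J_skew J hJ2 hJiso p (‖w'‖⁻¹ • w')
      have hsk2 := J_skew J hJ2 hJiso w0 (‖w'‖⁻¹ • w')
      exact ⟨‖w'‖⁻¹ • w', norm_smul_inv_norm hw'0, hip, by linarith, hiw0, by linarith⟩
    have e1 : A p p = A w w := hcore p w hp hwu hw1 hw2
    have e2 : A w0 w0 = A w w := hcore w0 w hw0u hwu hw3 hw4
    rw [e1, e2]
  -- `A` on the diagonal
  have hdiag : ∀ p : V, A p p = A w0 w0 * ⟪p, p⟫_ℝ := by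
    intro p
    by_cases hp : p = 0
    · subst hp
      rw [hAzero, inner_zero_left]
      ring
    · have hn : ‖p‖ ≠ 0 := by simpa using hp
      have hu : ‖(‖p‖⁻¹ • p)‖ = 1 := norm_smul_inv_norm hp
      have hps : p = ‖p‖ • (‖p‖⁻¹ • p) := by
        rw [smul_smul]
        field_simp
        rw [one_smul]
      calc A p p = A (‖p‖ • (‖p‖⁻¹ • p)) (‖p‖ • (‖p‖⁻¹ • p)) := by rw [← hps]
        _ = ‖p‖ ^ 2 * A (‖p‖⁻¹ • p) (‖p‖⁻¹ • p) := hAsmul _ _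
        _ = ‖p‖ ^ 2 * A w0 w0 := by rw [hAunit _ hu]
        _ = A w0 w0 * ⟪p, p⟫_ℝ := by rw [real_inner_self_eq_norm_sq]; ring
  -- full polarization
  have key : ∀ p q : V, A p q = A w0 w0 * ⟪p, q⟫_ℝ := by
    intro p q
    have h1 := hAexp p q
    rw [hdiag (p + q), hdiag p, hdiag q, real_inner_add_add_self, hAsym q p] at h1
    have h2 : ⟪q, p⟫_ℝ = ⟪p, q⟫_ℝ := real_inner_comm _ _
    nlinarith [h1]
  -- the trace of `A`
  have htr : (((m : ℝ) + 1) * (∑ i, ∑ j, R (b j) (b i) (b i) (b j))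
      - 3 * (∑ i, ∑ j, R (b i) (b j) (J (b j)) (J (b i))))
      = 2 * (m : ℝ) * A w0 w0 := by
    have e : (((m : ℝ) + 1) * (∑ i, ∑ j, R (b j) (b i) (b i) (b j))
        - 3 * (∑ i, ∑ j, R (b i) (b j) (J (b j)) (J (b i)))) = ∑ i, A (b i) (b i) := by
      rw [Finset.mul_sum, Finset.mul_sum, ← Finset.sum_sub_distrib]
      exact Finset.sum_congr rfl fun i _ => (hA (b i) (b i)).symm
    rw [e]
    have e2 : ∀ i, A (b i) (b i) = A w0 w0 := by
      intro i
      rw [key (b i) (b i), real_inner_self_eq_norm_sq, b.orthonormal.1 i]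
      ring
    rw [Finset.sum_congr rfl fun i _ => e2 i, Finset.sum_const, Finset.card_univ,
      Fintype.card_fin, nsmul_eq_mul]
    push_cast
    ring
  have hm0 : (m : ℝ) ≠ 0 := Nat.cast_ne_zero.mpr (by omega)
  rw [← hA y z, key y z, htr]
  field_simp
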